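/- A point (e_1, ..., e_{2p}) ∈ k^{2p} lies in the vanishing locus of the elimination ideal ⟨f_0, ..., f_{p-1}⟩ ∩ k[e_1,...,e_{2p}] (with f_0 = t² + e_p t + e_{2p}, f_i = e_i t + e_{p+i}) if and only if there exist u_1, ..., u_p, α ∈ k such that e_i = u_i (1 ≤ i ≤ p-1), e_p = u_p + α, and e_{p+i} = u_i α (1 ≤ i ≤ p); equivalently, the polynomials f_0, ..., f_{p-1} specialized at this point have a common root. -/

import Mathlib

/-- The generators `f₀ = t² + e_p t + e_{2p}` and `f_i = e_i t + e_{p+i}`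
(1 ≤ i ≤ p-1) of the ideal `⟨f₀,…,f_{p-1}⟩ ⊆ k[e_1,…,e_{2p}][t]`
(variables 0-indexed). -/
noncomputable def q2Gens (k : Type*) [Field k] (p : ℕ) (hp : 3 ≤ p) :
    Set (Polynomial (MvPolynomial (Fin (2 * p)) k)) :=
  insert
    (Polynomial.X ^ 2 +
      Polynomial.C (MvPolynomial.X ⟨p - 1, by omega⟩) * Polynomial.X +
      Polynomial.C (MvPolynomial.X ⟨2 * p - 1, by omega⟩))
    {g | ∃ j : Fin (p - 1),
      g = Polynomial.C (MvPolynomial.X (⟨(j : ℕ), by have := j.isLt; omega⟩ : Fin (2 * p))) *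
            Polynomial.X +
          Polynomial.C (MvPolynomial.X (⟨p + (j : ℕ), by have := j.isLt; omega⟩ : Fin (2 * p)))}

section AuxLemmas

variable {k : Type*} [Field k]

/-- Part 2: the parametrization is equivalent to the existence of a common root. -/
theorem stmt6_aux_param_iff_root (p : ℕ) (hp : 3 ≤ p) (e : Fin (2 * p) → k) :
    (∃ u : Fin p → k, ∃ α : k,
        (∀ j : Fin (p - 1), e ⟨(j : ℕ), by have := j.isLt; omega⟩ =
            u ⟨(j : ℕ), by have := j.isLt; exact Nat.lt_of_lt_of_le this (Nat.sub_le p 1)⟩) ∧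
        e ⟨p - 1, by omega⟩ = u ⟨p - 1, Nat.sub_lt (by omega) Nat.one_pos⟩ + α ∧
        (∀ j : Fin p, e ⟨p + (j : ℕ), by have := j.isLt; rw [two_mul]; exact Nat.add_lt_add_left this p⟩ = u j * α)) ↔
      (∃ β : k,
        (Polynomial.X ^ 2 + Polynomial.C (e ⟨p - 1, by omega⟩) * Polynomial.X +
            Polynomial.C (e ⟨2 * p - 1, by omega⟩)).eval β = 0 ∧
        ∀ j : Fin (p - 1),
          (Polynomial.C (e ⟨(j : ℕ), by have := j.isLt; omega⟩) * Polynomial.X +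
              Polynomial.C (e ⟨p + (j : ℕ), by have := j.isLt; omega⟩)).eval β = 0) := by
  constructor
  · rintro ⟨u, α, h1, h2, h3⟩
    refine ⟨-α, ?_, ?_⟩
    · have h3p : e ⟨p + (p - 1), by omega⟩ = u ⟨p - 1, Nat.sub_lt (by omega) Nat.one_pos⟩ * α :=
        h3 ⟨p - 1, Nat.sub_lt (by omega) Nat.one_pos⟩
      have hidx : (⟨p + (p - 1), by omega⟩ : Fin (2 * p)) = ⟨2 * p - 1, by omega⟩ := by
        apply Fin.ext; simp; omega
      rw [hidx] at h3p
      simp only [Polynomial.eval_add, Polynomial.eval_mul, Polynomial.eval_pow,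
        Polynomial.eval_X, Polynomial.eval_C]
      rw [h2, h3p]; ring
    · intro j
      have h3j : e ⟨p + (j : ℕ), by have := j.isLt; omega⟩ =
          u ⟨(j : ℕ), by have := j.isLt; exact Nat.lt_of_lt_of_le this (Nat.sub_le p 1)⟩ * α :=
        h3 ⟨(j : ℕ), by have := j.isLt; exact Nat.lt_of_lt_of_le this (Nat.sub_le p 1)⟩
      simp only [Polynomial.eval_add, Polynomial.eval_mul, Polynomial.eval_X,
        Polynomial.eval_C]
      rw [h1 j, h3j]; ring
  · rintro ⟨β, h0, hj⟩
    simp only [Polynomial.eval_add, Polynomial.eval_mul, Polynomial.eval_pow,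
      Polynomial.eval_X, Polynomial.eval_C] at h0 hj
    refine ⟨fun j => if (j : ℕ) < p - 1 then e ⟨(j : ℕ), by have := j.isLt; omega⟩
      else e ⟨p - 1, by omega⟩ + β, -β, ?_, ?_, ?_⟩
    · intro j
      have : ((⟨(j : ℕ), by have := j.isLt; exact Nat.lt_of_lt_of_le this (Nat.sub_le p 1)⟩ : Fin p) : ℕ) < p - 1 := j.isLt
      simp only [this, if_pos]
    · have : ¬ ((⟨p - 1, Nat.sub_lt (by omega) Nat.one_pos⟩ : Fin p) : ℕ) < p - 1 := by simp
      simp only [this, if_neg, not_false_iff]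
      ring
    · intro j
      by_cases hlt : (j : ℕ) < p - 1
      · have hj' := hj ⟨(j : ℕ), hlt⟩
        simp only [hlt, if_pos]
        have hidx : (⟨p + (j : ℕ), by have := j.isLt; rw [two_mul]; exact Nat.add_lt_add_left this p⟩ : Fin (2 * p)) =
            ⟨p + ((⟨(j : ℕ), hlt⟩ : Fin (p - 1)) : ℕ), by
              have := (⟨(j : ℕ), hlt⟩ : Fin (p - 1)).isLt; omega⟩ := rfl
        rw [hidx]
        have hidx2 : (⟨(j : ℕ), by have := j.isLt; omega⟩ : Fin (2 * p)) =
            (⟨((⟨(j : ℕ), hlt⟩ : Fin (p - 1)) : ℕ), by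
              have := (⟨(j : ℕ), hlt⟩ : Fin (p - 1)).isLt; omega⟩ : Fin (2 * p)) := rfl
        linear_combination hj'
      · have hval : (j : ℕ) = p - 1 := by have := j.isLt; omega
        simp only [hlt, if_neg, not_false_iff]
        have hidx : (⟨p + (j : ℕ), by have := j.isLt; rw [two_mul]; exact Nat.add_lt_add_left this p⟩ : Fin (2 * p)) =
            ⟨2 * p - 1, by omega⟩ := by
          apply Fin.ext; simp [hval]; omega
        rw [hidx]
        linear_combination h0

/-- If a common root exists, every element of the elimination ideal vanishes at `e`. -/
theorem stmt6_aux_root_imp_elim (p : ℕ) (hp : 3 ≤ p) (e : Fin (2 * p) → k)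
    (h : ∃ β : k,
        (Polynomial.X ^ 2 + Polynomial.C (e ⟨p - 1, by omega⟩) * Polynomial.X +
            Polynomial.C (e ⟨2 * p - 1, by omega⟩)).eval β = 0 ∧
        ∀ j : Fin (p - 1),
          (Polynomial.C (e ⟨(j : ℕ), by have := j.isLt; omega⟩) * Polynomial.X +
              Polynomial.C (e ⟨p + (j : ℕ), by have := j.isLt; omega⟩)).eval β = 0) :
    ∀ g ∈ Ideal.comap (Polynomial.C : MvPolynomial (Fin (2 * p)) k →+*
          Polynomial (MvPolynomial (Fin (2 * p)) k)) (Ideal.span (q2Gens k p hp)),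
      MvPolynomial.eval e g = 0 := by
  obtain ⟨β, h0, hj⟩ := h
  simp only [Polynomial.eval_add, Polynomial.eval_mul, Polynomial.eval_pow,
    Polynomial.eval_X, Polynomial.eval_C] at h0 hj
  intro g hg
  have hg' : Polynomial.C g ∈ Ideal.span (q2Gens k p hp) := Ideal.mem_comap.mp hg
  set ψ : Polynomial (MvPolynomial (Fin (2 * p)) k) →+* k :=
    Polynomial.eval₂RingHom (MvPolynomial.eval e) β with hψ
  have hker : Ideal.span (q2Gens k p hp) ≤ RingHom.ker ψ := by
    rw [Ideal.span_le]
    intro f hf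
    simp only [q2Gens, Set.mem_insert_iff, Set.mem_setOf_eq] at hf
    rcases hf with rfl | ⟨j, rfl⟩ <;>
      simp only [SetLike.mem_coe, RingHom.mem_ker, hψ, Polynomial.coe_eval₂RingHom,
        Polynomial.eval₂_add, Polynomial.eval₂_mul, Polynomial.eval₂_pow,
        Polynomial.eval₂_X, Polynomial.eval₂_C, MvPolynomial.eval_X]
    · exact h0
    · exact hj j
  have := hker hg'
  rw [RingHom.mem_ker] at this
  rw [hψ, Polynomial.coe_eval₂RingHom] at this
  rwa [Polynomial.eval₂_C] at this

/-- If `e` kills the elimination ideal, a common root exists. -/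
theorem stmt6_aux_elim_imp_root [IsAlgClosed k] (p : ℕ) (hp : 3 ≤ p) (e : Fin (2 * p) → k)
    (h : ∀ g ∈ Ideal.comap (Polynomial.C : MvPolynomial (Fin (2 * p)) k →+*
          Polynomial (MvPolynomial (Fin (2 * p)) k)) (Ideal.span (q2Gens k p hp)),
        MvPolynomial.eval e g = 0) :
    ∃ β : k,
        (Polynomial.X ^ 2 + Polynomial.C (e ⟨p - 1, by omega⟩) * Polynomial.X +
            Polynomial.C (e ⟨2 * p - 1, by omega⟩)).eval β = 0 ∧
        ∀ j : Fin (p - 1),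
          (Polynomial.C (e ⟨(j : ℕ), by have := j.isLt; omega⟩) * Polynomial.X +
              Polynomial.C (e ⟨p + (j : ℕ), by have := j.isLt; omega⟩)).eval β = 0 := by
  -- generators
  have hf0mem : (Polynomial.X ^ 2 +
      Polynomial.C (MvPolynomial.X (⟨p - 1, by omega⟩ : Fin (2 * p))) * Polynomial.X +
      Polynomial.C (MvPolynomial.X (⟨2 * p - 1, by omega⟩ : Fin (2 * p))) :
        Polynomial (MvPolynomial (Fin (2 * p)) k)) ∈ q2Gens k p hp :=
    Set.mem_insert _ _
  have hfjmem : ∀ j : Fin (p - 1),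
      (Polynomial.C (MvPolynomial.X (⟨(j : ℕ), by have := j.isLt; omega⟩ : Fin (2 * p))) *
            Polynomial.X +
          Polynomial.C (MvPolynomial.X (⟨p + (j : ℕ), by have := j.isLt; omega⟩ : Fin (2 * p))) :
        Polynomial (MvPolynomial (Fin (2 * p)) k)) ∈ q2Gens k p hp := fun j =>
    Set.mem_insert_iff.mpr (Or.inr ⟨j, rfl⟩)
  -- resultant-type elements of the elimination ideal
  have hR : ∀ j : Fin (p - 1),
      e ⟨2 * p - 1, by omega⟩ * (e ⟨(j : ℕ), by have := j.isLt; omega⟩) ^ 2 -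
        e ⟨(j : ℕ), by have := j.isLt; omega⟩ * e ⟨p - 1, by omega⟩ *
          e ⟨p + (j : ℕ), by have := j.isLt; omega⟩ +
        (e ⟨p + (j : ℕ), by have := j.isLt; omega⟩) ^ 2 = 0 := by
    intro j
    set r : MvPolynomial (Fin (2 * p)) k :=
      MvPolynomial.X ⟨2 * p - 1, by omega⟩ * (MvPolynomial.X ⟨(j : ℕ), by have := j.isLt; omega⟩) ^ 2 -
        MvPolynomial.X ⟨(j : ℕ), by have := j.isLt; omega⟩ * MvPolynomial.X ⟨p - 1, by omega⟩ *
          MvPolynomial.X ⟨p + (j : ℕ), by have := j.isLt; omega⟩ +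
        (MvPolynomial.X ⟨p + (j : ℕ), by have := j.isLt; omega⟩) ^ 2 with hr
    have hmem : Polynomial.C r ∈ Ideal.span (q2Gens k p hp) := by
      have heq : Polynomial.C r =
          Polynomial.C ((MvPolynomial.X (⟨(j : ℕ), by have := j.isLt; omega⟩ : Fin (2 * p))) ^ 2) *
            (Polynomial.X ^ 2 +
              Polynomial.C (MvPolynomial.X (⟨p - 1, by omega⟩ : Fin (2 * p))) * Polynomial.X +
              Polynomial.C (MvPolynomial.X (⟨2 * p - 1, by omega⟩ : Fin (2 * p)))) -
          (Polynomial.C (MvPolynomial.X (⟨(j : ℕ), by have := j.isLt; omega⟩ : Fin (2 * p))) *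
              Polynomial.X +
            Polynomial.C (MvPolynomial.X (⟨(j : ℕ), by have := j.isLt; omega⟩ : Fin (2 * p)) *
                MvPolynomial.X (⟨p - 1, by omega⟩ : Fin (2 * p)) -
              MvPolynomial.X (⟨p + (j : ℕ), by have := j.isLt; omega⟩ : Fin (2 * p)))) *
            (Polynomial.C (MvPolynomial.X (⟨(j : ℕ), by have := j.isLt; omega⟩ : Fin (2 * p))) *
                Polynomial.X +
              Polynomial.C (MvPolynomial.X (⟨p + (j : ℕ), by have := j.isLt; omega⟩ : Fin (2 * p)))) := by
        rw [hr]
        simp only [map_sub, map_add, map_mul, map_pow]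
        ring
      rw [heq]
      exact Ideal.sub_mem _
        (Ideal.mul_mem_left _ _ (Ideal.subset_span hf0mem))
        (Ideal.mul_mem_left _ _ (Ideal.subset_span (hfjmem j)))
    have := h r (Ideal.mem_comap.mpr hmem)
    rw [hr] at this
    simpa only [map_sub, map_add, map_mul, map_pow, MvPolynomial.eval_X] using this
  -- Wronskian-type elements
  have hW : ∀ i j : Fin (p - 1),
      e ⟨(i : ℕ), by have := i.isLt; omega⟩ * e ⟨p + (j : ℕ), by have := j.isLt; omega⟩ -
        e ⟨(j : ℕ), by have := j.isLt; omega⟩ * e ⟨p + (i : ℕ), by have := i.isLt; omega⟩ = 0 := by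
    intro i j
    set w : MvPolynomial (Fin (2 * p)) k :=
      MvPolynomial.X ⟨(i : ℕ), by have := i.isLt; omega⟩ *
          MvPolynomial.X ⟨p + (j : ℕ), by have := j.isLt; omega⟩ -
        MvPolynomial.X ⟨(j : ℕ), by have := j.isLt; omega⟩ *
          MvPolynomial.X ⟨p + (i : ℕ), by have := i.isLt; omega⟩ with hw
    have hmem : Polynomial.C w ∈ Ideal.span (q2Gens k p hp) := by
      have heq : Polynomial.C w =
          Polynomial.C (MvPolynomial.X (⟨(i : ℕ), by have := i.isLt; omega⟩ : Fin (2 * p))) *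
            (Polynomial.C (MvPolynomial.X (⟨(j : ℕ), by have := j.isLt; omega⟩ : Fin (2 * p))) *
                Polynomial.X +
              Polynomial.C (MvPolynomial.X (⟨p + (j : ℕ), by have := j.isLt; omega⟩ : Fin (2 * p)))) -
          Polynomial.C (MvPolynomial.X (⟨(j : ℕ), by have := j.isLt; omega⟩ : Fin (2 * p))) *
            (Polynomial.C (MvPolynomial.X (⟨(i : ℕ), by have := i.isLt; omega⟩ : Fin (2 * p))) *
                Polynomial.X +
              Polynomial.C (MvPolynomial.X (⟨p + (i : ℕ), by have := i.isLt; omega⟩ : Fin (2 * p)))) := by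
        rw [hw]
        simp only [map_sub, map_add, map_mul]
        ring
      rw [heq]
      exact Ideal.sub_mem _
        (Ideal.mul_mem_left _ _ (Ideal.subset_span (hfjmem j)))
        (Ideal.mul_mem_left _ _ (Ideal.subset_span (hfjmem i)))
    have := h w (Ideal.mem_comap.mpr hmem)
    rw [hw] at this
    simpa only [map_sub, map_mul, MvPolynomial.eval_X] using this
  -- find the roots of the quadratic
  obtain ⟨β, hβ⟩ := IsAlgClosed.exists_root
    (Polynomial.X ^ 2 + Polynomial.C (e ⟨p - 1, by omega⟩) * Polynomial.X +
      Polynomial.C (e ⟨2 * p - 1, by omega⟩)) (by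
    have hdeg : (Polynomial.X ^ 2 + Polynomial.C (e ⟨p - 1, by omega⟩) * Polynomial.X +
        Polynomial.C (e ⟨2 * p - 1, by omega⟩) : Polynomial k).degree = 2 := by
      compute_degree!
    rw [hdeg]; exact two_ne_zero)
  have hβ' : β ^ 2 + e ⟨p - 1, by omega⟩ * β + e ⟨2 * p - 1, by omega⟩ = 0 := by
    simpa only [Polynomial.IsRoot, Polynomial.eval_add, Polynomial.eval_mul,
      Polynomial.eval_pow, Polynomial.eval_X, Polynomial.eval_C] using hβ
  set γ : k := -(e ⟨p - 1, by omega⟩) - β with hγdef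
  have hsum : β + γ = -(e ⟨p - 1, by omega⟩) := by rw [hγdef]; ring
  have hprod : β * γ = e ⟨2 * p - 1, by omega⟩ := by
    rw [hγdef]; linear_combination -hβ'
  have hγ' : γ ^ 2 + e ⟨p - 1, by omega⟩ * γ + e ⟨2 * p - 1, by omega⟩ = 0 := by
    rw [hγdef]; linear_combination hβ'
  have hprodj : ∀ j : Fin (p - 1),
      (e ⟨(j : ℕ), by have := j.isLt; omega⟩ * β + e ⟨p + (j : ℕ), by have := j.isLt; omega⟩) *
      (e ⟨(j : ℕ), by have := j.isLt; omega⟩ * γ + e ⟨p + (j : ℕ), by have := j.isLt; omega⟩) = 0 := by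
    intro j
    linear_combination hR j + (e ⟨(j : ℕ), by have := j.isLt; omega⟩) ^ 2 * hprod +
      (e ⟨(j : ℕ), by have := j.isLt; omega⟩ * e ⟨p + (j : ℕ), by have := j.isLt; omega⟩) * hsum
  by_cases hall : ∀ j : Fin (p - 1),
      e ⟨(j : ℕ), by have := j.isLt; omega⟩ * β + e ⟨p + (j : ℕ), by have := j.isLt; omega⟩ = 0
  · refine ⟨β, ?_, ?_⟩
    · simp only [Polynomial.eval_add, Polynomial.eval_mul, Polynomial.eval_pow,
        Polynomial.eval_X, Polynomial.eval_C]
      exact hβ'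
    · intro j
      simp only [Polynomial.eval_add, Polynomial.eval_mul, Polynomial.eval_X,
        Polynomial.eval_C]
      exact hall j
  · push_neg at hall
    obtain ⟨i, hi⟩ := hall
    have hgiγ : e ⟨(i : ℕ), by have := i.isLt; omega⟩ * γ +
        e ⟨p + (i : ℕ), by have := i.isLt; omega⟩ = 0 :=
      (mul_eq_zero.mp (hprodj i)).resolve_left hi
    have hroots : ∀ j : Fin (p - 1),
        e ⟨(j : ℕ), by have := j.isLt; omega⟩ * γ +
          e ⟨p + (j : ℕ), by have := j.isLt; omega⟩ = 0 := by
      intro j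
      by_cases hai : e ⟨(i : ℕ), by have := i.isLt; omega⟩ = 0
      · have hbi : e ⟨p + (i : ℕ), by have := i.isLt; omega⟩ ≠ 0 := by
          intro hbi
          apply hi
          rw [hai, hbi]; ring
        have haj : e ⟨(j : ℕ), by have := j.isLt; omega⟩ = 0 := by
          have hwij := hW i j
          rw [hai, zero_mul, zero_sub, neg_eq_zero] at hwij
          exact (mul_eq_zero.mp hwij).resolve_right hbi
        have hbj : e ⟨p + (j : ℕ), by have := j.isLt; omega⟩ = 0 := by
          have := hprodj j
          rw [haj] at this
          simp only [zero_mul, zero_add] at this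
          exact (mul_self_eq_zero).mp this
        rw [haj, hbj]; ring
      · have key : e ⟨(i : ℕ), by have := i.isLt; omega⟩ *
            (e ⟨(j : ℕ), by have := j.isLt; omega⟩ * γ +
              e ⟨p + (j : ℕ), by have := j.isLt; omega⟩) =
            e ⟨(j : ℕ), by have := j.isLt; omega⟩ *
            (e ⟨(i : ℕ), by have := i.isLt; omega⟩ * γ +
              e ⟨p + (i : ℕ), by have := i.isLt; omega⟩) := by
          linear_combination hW i j
        rw [hgiγ, mul_zero] at key
        exact (mul_eq_zero.mp key).resolve_left hai
    refine ⟨γ, ?_, ?_⟩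
    · simp only [Polynomial.eval_add, Polynomial.eval_mul, Polynomial.eval_pow,
        Polynomial.eval_X, Polynomial.eval_C]
      exact hγ'
    · intro j
      simp only [Polynomial.eval_add, Polynomial.eval_mul, Polynomial.eval_X,
        Polynomial.eval_C]
      exact hroots j

end AuxLemmas

/-- a point `(e_1,…,e_{2p}) ∈ k^{2p}` lies in the vanishing locus of the
elimination ideal `⟨f₀,…,f_{p-1}⟩ ∩ k[e_1,…,e_{2p}]` iff there are `u_1,…,u_p, α ∈ k`
with `e_i = u_i` (i ≤ p-1), `e_p = u_p + α`, `e_{p+i} = u_i α`; equivalently, iff the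
specialized polynomials `f₀,…,f_{p-1}` have a common root. -/
theorem stmt6 (k : Type*) [Field k] [IsAlgClosed k] (p : ℕ) (hp : 3 ≤ p)
    (e : Fin (2 * p) → k) :
    ((∀ g ∈ Ideal.comap (Polynomial.C : MvPolynomial (Fin (2 * p)) k →+*
          Polynomial (MvPolynomial (Fin (2 * p)) k)) (Ideal.span (q2Gens k p hp)),
        MvPolynomial.eval e g = 0) ↔
      (∃ u : Fin p → k, ∃ α : k,
        (∀ j : Fin (p - 1), e ⟨(j : ℕ), by have := j.isLt; omega⟩ =
            u ⟨(j : ℕ), by have := j.isLt; omega⟩) ∧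
        e ⟨p - 1, by omega⟩ = u ⟨p - 1, by omega⟩ + α ∧
        (∀ j : Fin p, e ⟨p + (j : ℕ), by have := j.isLt; omega⟩ = u j * α))) ∧
    ((∃ u : Fin p → k, ∃ α : k,
        (∀ j : Fin (p - 1), e ⟨(j : ℕ), by have := j.isLt; omega⟩ =
            u ⟨(j : ℕ), by have := j.isLt; omega⟩) ∧
        e ⟨p - 1, by omega⟩ = u ⟨p - 1, by omega⟩ + α ∧
        (∀ j : Fin p, e ⟨p + (j : ℕ), by have := j.isLt; omega⟩ = u j * α)) ↔
      (∃ β : k,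
        (Polynomial.X ^ 2 + Polynomial.C (e ⟨p - 1, by omega⟩) * Polynomial.X +
            Polynomial.C (e ⟨2 * p - 1, by omega⟩)).eval β = 0 ∧
        ∀ j : Fin (p - 1),
          (Polynomial.C (e ⟨(j : ℕ), by have := j.isLt; omega⟩) * Polynomial.X +
              Polynomial.C (e ⟨p + (j : ℕ), by have := j.isLt; omega⟩)).eval β = 0)) := by
  refine ⟨?_, stmt6_aux_param_iff_root p hp e⟩
  exact Iff.trans
    ⟨stmt6_aux_elim_imp_root p hp e, stmt6_aux_root_imp_elim p hp e⟩
    (stmt6_aux_param_iff_root p hp e).symm
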